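/- For a finite reversible lazy Markov chain with combinatorial distance and an edge x ∼ y: if for all f ∈ Lip(1) with f(y)−f(x) = 1 and all λ ≥ 0 both Δe^{λf}(x)/e^{λf(x)} ≥ Δe^{λf}(y)/e^{λf(y)} and Δe^{−λf}(x)/e^{−λf(x)} ≤ Δe^{−λf}(y)/e^{−λf(y)} hold, then there exists a coupling π between P(x,·) and P(y,·) supported on pairs at distance at most 1 (i.e., the edge has non-negative Ollivier sectional curvature). -/

import Mathlib

open Finset Real

/-- Markov chain Laplacian `Δf(x) = ∑_y P(x,y)(f(y)-f(x))`. -/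
noncomputable def lap {V : Type*} [Fintype V] (P : V → V → ℝ) (f : V → ℝ) (x : V) : ℝ :=
  ∑ y, P x y * (f y - f x)

open scoped Classical

lemma coef_extract (a b c : ℝ) (hc : 0 ≤ c)
    (h : ∀ l : ℝ, 1 ≤ l →
      c * (1 - exp l) + a * (exp l * exp l - exp l) ≤ b * (exp l - 1) * exp l) : a ≤ b := by
  by_contra hab
  push_neg at hab
  have hd : 0 < a - b := by linarith
  set l : ℝ := max 1 (Real.log ((c + 1) / (a - b))) with hl
  have hl1 : 1 ≤ l := le_max_left _ _
  have hepos : (0:ℝ) < exp l := exp_pos l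
  have he1 : 2 ≤ exp l := by
    have := Real.add_one_le_exp l
    linarith
  have hexp : (c + 1) / (a - b) ≤ exp l := by
    rcases le_or_gt ((c + 1) / (a - b)) 0 with h0 | h0
    · linarith
    · calc (c + 1) / (a - b) = exp (Real.log ((c + 1) / (a - b))) := (Real.exp_log h0).symm
        _ ≤ exp l := exp_le_exp.mpr (le_max_right _ _)
  have hce : c + 1 ≤ (a - b) * exp l := by
    rw [div_le_iff₀ hd] at hexp
    linarith [hexp]
  have h2 := h l hl1
  have h3 : (a - b) * exp l * (exp l - 1) ≤ c * (exp l - 1) := by nlinarith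
  have h4 : (a - b) * exp l ≤ c := by
    have hpos : (0:ℝ) < exp l - 1 := by linarith
    have := le_of_mul_le_mul_right h3 hpos
    linarith
  linarith

section GraphHelpers

variable {V : Type*} {G : SimpleGraph V} {u v : V}

lemma dist_le_one_of_adj (h : G.Adj u v) : G.dist u v ≤ 1 :=
  le_of_eq (SimpleGraph.dist_eq_one_iff_adj.mpr h)

lemma one_le_dist_of_ne (hconn : G.Connected) (h : u ≠ v) : 1 ≤ G.dist u v :=
  hconn.pos_dist_of_ne h

lemma two_le_dist_of (hconn : G.Connected) (h1 : u ≠ v) (h2 : ¬ G.Adj u v) :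
    2 ≤ G.dist u v := by
  have h0 : G.dist u v ≠ 0 := by
    intro h
    exact h1 (hconn.dist_eq_zero_iff.mp h)
  have hone : G.dist u v ≠ 1 := by
    intro h
    exact h2 (SimpleGraph.dist_eq_one_iff_adj.mp h)
  omega

end GraphHelpers

section SumSplit

variable {V : Type*} [Fintype V]

lemma sum_split_W (W : V → ℕ) (hW : ∀ z, W z ≤ 2) (r : V → ℝ) (φ : ℕ → ℝ) :
    ∑ z, r z * φ (W z) =
      (∑ z ∈ univ.filter (fun z => W z = 0), r z) * φ 0 +
      (∑ z ∈ univ.filter (fun z => W z = 1), r z) * φ 1 +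
      (∑ z ∈ univ.filter (fun z => W z = 2), r z) * φ 2 := by
  have key : ∀ z, r z * φ (W z) =
      (if W z = 0 then r z else 0) * φ 0 +
      (if W z = 1 then r z else 0) * φ 1 +
      (if W z = 2 then r z else 0) * φ 2 := by
    intro z
    have := hW z
    interval_cases h : (W z) <;> simp
  rw [Finset.sum_congr rfl (fun z _ => key z)]
  rw [Finset.sum_add_distrib, Finset.sum_add_distrib]
  congr 1
  · congr 1
    · rw [← Finset.sum_mul, Finset.sum_filter]
    · rw [← Finset.sum_mul, Finset.sum_filter]
  · rw [← Finset.sum_mul, Finset.sum_filter]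

end SumSplit

section FracHall

variable {V : Type*} [Fintype V] [DecidableEq V]

/-- neighborhood of a finset under a relation -/
noncomputable def Nb (R : V → V → Prop) (A : Finset V) : Finset V :=
  univ.filter fun b => ∃ a ∈ A, R a b

lemma mem_Nb {R : V → V → Prop} {A : Finset V} {b : V} :
    b ∈ Nb R A ↔ ∃ a ∈ A, R a b := by simp [Nb]

lemma Nb_mono {R : V → V → Prop} {A B : Finset V} (h : A ⊆ B) : Nb R A ⊆ Nb R B := by
  intro b hb
  rw [mem_Nb] at hb ⊢
  obtain ⟨a, ha, hr⟩ := hb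
  exact ⟨a, h ha, hr⟩

lemma Nb_union {R : V → V → Prop} (A B : Finset V) :
    Nb R (A ∪ B) = Nb R A ∪ Nb R B := by
  ext b
  simp only [mem_Nb, Finset.mem_union]
  constructor
  · rintro ⟨a, ha | ha, hr⟩
    · exact Or.inl ⟨a, ha, hr⟩
    · exact Or.inr ⟨a, ha, hr⟩
  · rintro (⟨a, ha, hr⟩ | ⟨a, ha, hr⟩)
    · exact ⟨a, Or.inl ha, hr⟩
    · exact ⟨a, Or.inr ha, hr⟩

/-- deficiency of a set -/
noncomputable def dfc (R : V → V → Prop) (μ ν : V → ℝ) (A : Finset V) : ℝ :=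
  ∑ b ∈ Nb R A, ν b - ∑ a ∈ A, μ a

lemma dfc_union_le {R : V → V → Prop} {μ ν : V → ℝ} (hν : ∀ b, 0 ≤ ν b)
    (A B : Finset V) :
    dfc R μ ν (A ∪ B) + dfc R μ ν (A ∩ B) ≤ dfc R μ ν A + dfc R μ ν B := by
  have h1 : ∑ a ∈ A ∪ B, μ a + ∑ a ∈ A ∩ B, μ a = ∑ a ∈ A, μ a + ∑ a ∈ B, μ a :=
    Finset.sum_union_inter
  have h2 : ∑ b ∈ Nb R A ∪ Nb R B, ν b + ∑ b ∈ Nb R A ∩ Nb R B, ν b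
      = ∑ b ∈ Nb R A, ν b + ∑ b ∈ Nb R B, ν b := Finset.sum_union_inter
  have h3 : ∑ b ∈ Nb R (A ∩ B), ν b ≤ ∑ b ∈ Nb R A ∩ Nb R B, ν b := by
    apply Finset.sum_le_sum_of_subset_of_nonneg
    · intro b hb
      exact Finset.mem_inter.mpr
        ⟨Nb_mono Finset.inter_subset_left hb, Nb_mono Finset.inter_subset_right hb⟩
    · intro b _ _; exact hν b
  simp only [dfc]
  rw [Nb_union]
  linarith

/-- Fractional Hall theorem -/
lemma fracHall (R : V → V → Prop) (hrefl : ∀ a, R a a) :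
    ∀ (n : ℕ) (μ ν : V → ℝ), (∀ a, 0 ≤ μ a) → (∀ b, 0 ≤ ν b) →
    (∑ a, μ a = ∑ b, ν b) → (∀ A : Finset V, 0 ≤ dfc R μ ν A) →
    ((univ.filter fun a => μ a ≠ 0).card + (univ.filter fun b => ν b ≠ 0).card +
      ((univ : Finset V).powerset.filter fun A => dfc R μ ν A ≠ 0).card ≤ n) →
    ∃ T : V → V → ℝ, (∀ a b, 0 ≤ T a b) ∧ (∀ a, ∑ b, T a b = μ a) ∧
      (∀ b, ∑ a, T a b = ν b) ∧ (∀ a b, 0 < T a b → R a b) := by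
  intro n
  induction n with
  | zero =>
    intro μ ν hμ hν hsum hHall hmsr
    have hμ0 : ∀ a, μ a = 0 := by
      intro a
      by_contra h
      have : a ∈ univ.filter fun a => μ a ≠ 0 := by simp [h]
      have := Finset.card_pos.mpr ⟨a, this⟩
      omega
    have hν0 : ∀ b, ν b = 0 := by
      intro b
      by_contra h
      have : b ∈ univ.filter fun b => ν b ≠ 0 := by simp [h]
      have := Finset.card_pos.mpr ⟨b, this⟩
      omega
    exact ⟨fun _ _ => 0, fun _ _ => le_refl 0, fun a => by simp [hμ0 a],
      fun b => by simp [hν0 b], fun a b h => absurd h (lt_irrefl 0)⟩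
  | succ n IH =>
    intro μ ν hμ hν hsum hHall hmsr
    by_cases hsupp : (univ.filter fun a => μ a ≠ 0) = ∅
    · have hμ0 : ∀ a, μ a = 0 := by
        intro a
        by_contra h
        have : a ∈ univ.filter fun a => μ a ≠ 0 := by simp [h]
        rw [hsupp] at this
        exact absurd this (Finset.notMem_empty a)
      have hν0 : ∀ b, ν b = 0 := by
        have hts : ∑ b, ν b = 0 := by
          rw [← hsum]
          exact Finset.sum_eq_zero fun a _ => hμ0 a
        intro b
        have := (Finset.sum_eq_zero_iff_of_nonneg (fun b _ => hν b)).mp hts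
        exact this b (Finset.mem_univ b)
      exact ⟨fun _ _ => 0, fun _ _ => le_refl 0, fun a => by simp [hμ0 a],
        fun b => by simp [hν0 b], fun a b h => absurd h (lt_irrefl 0)⟩
    · -- main inductive step
      obtain ⟨astar, hastar⟩ := Finset.nonempty_of_ne_empty hsupp
      rw [Finset.mem_filter] at hastar
      have hμa : 0 < μ astar := lt_of_le_of_ne (hμ astar) (Ne.symm hastar.2)
      -- U : union of all tight sets avoiding astar
      set U : Finset V := ((univ : Finset V).powerset.filter
        fun A => dfc R μ ν A = 0 ∧ astar ∉ A).sup id with hUdef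
      have hU : dfc R μ ν U = 0 ∧ astar ∉ U := by
        rw [hUdef]
        apply Finset.sup_induction (p := fun S => dfc R μ ν S = 0 ∧ astar ∉ S)
        · constructor
          · have : Nb R (∅ : Finset V) = ∅ := by
              ext b; simp [mem_Nb]
            simp [dfc, this]
          · exact Finset.notMem_empty astar
        · intro A hA B hB
          constructor
          · have h1 := dfc_union_le (R := R) (μ := μ) hν A B
            have h2 := hHall (A ∪ B)
            have h3 := hHall (A ∩ B)
            have : dfc R μ ν (A ⊔ B) = dfc R μ ν (A ∪ B) := rfl
            rw [this]
            linarith [hA.1, hB.1]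
          · intro hmem
            rcases Finset.mem_union.mp hmem with h | h
            · exact hA.2 h
            · exact hB.2 h
        · intro A hA
          rw [Finset.mem_filter] at hA
          simpa using hA.2
      -- existence of bstar
      have hbex : ∃ bstar, R astar bstar ∧ 0 < ν bstar ∧ bstar ∉ Nb R U := by
        by_contra hno
        push_neg at hno
        have hnotmem : astar ∉ U := hU.2
        have hμside : ∑ a ∈ U ∪ {astar}, μ a = ∑ a ∈ U, μ a + μ astar := by
          rw [Finset.sum_union (Finset.disjoint_singleton_right.mpr hnotmem)]
          simp
        have hνside : ∑ b ∈ Nb R (U ∪ {astar}), ν b = ∑ b ∈ Nb R U, ν b := by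
          rw [Nb_union]
          rw [← Finset.union_sdiff_self_eq_union (s := Nb R U) (t := Nb R {astar})]
          rw [Finset.sum_union Finset.disjoint_sdiff]
          have hz : ∑ b ∈ Nb R {astar} \ Nb R U, ν b = 0 := by
            apply Finset.sum_eq_zero
            intro b hb
            rw [Finset.mem_sdiff, mem_Nb] at hb
            obtain ⟨⟨a, ha, hr⟩, hnb⟩ := hb
            rw [Finset.mem_singleton] at ha
            subst ha
            by_contra hne
            have hpos : 0 < ν b := lt_of_le_of_ne (hν b) (Ne.symm hne)
            exact hnb (hno b hr hpos)
          rw [hz, add_zero]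
        have hneg : dfc R μ ν (U ∪ {astar}) < 0 := by
          have hU1 := hU.1
          simp only [dfc] at hU1 ⊢
          rw [hμside, hνside]
          linarith
        exact absurd (hHall _) (not_le.mpr hneg)
      obtain ⟨bstar, hRb, hνb, hbU⟩ := hbex
      -- bad sets
      set Bad : Finset (Finset V) := (univ : Finset V).powerset.filter
        (fun A => astar ∉ A ∧ bstar ∈ Nb R A) with hBadDef
      have hBadpos : ∀ A ∈ Bad, 0 < dfc R μ ν A := by
        intro A hA
        rw [hBadDef, Finset.mem_filter] at hA
        rcases (hHall A).lt_or_eq with h | h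
        · exact h
        · exfalso
          have hmem : A ∈ (univ : Finset V).powerset.filter
              fun S => dfc R μ ν S = 0 ∧ astar ∉ S := by
            rw [Finset.mem_filter]
            exact ⟨Finset.mem_powerset.mpr (Finset.subset_univ A), h.symm, hA.2.1⟩
          have hAU : A ⊆ U := by
            have := Finset.le_sup (f := id) hmem
            simpa [hUdef] using this
          exact hbU (Nb_mono hAU hA.2.2)
      -- the transfer amount
      set t : ℝ := if hB : Bad.Nonempty then
          min (min (μ astar) (ν bstar)) (Bad.inf' hB (dfc R μ ν))
        else min (μ astar) (ν bstar) with htdef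
      have ht0 : 0 < t := by
        rw [htdef]; split_ifs with hB
        · refine lt_min (lt_min hμa hνb) ?_
          rw [Finset.lt_inf'_iff]
          intro A hA
          exact hBadpos A hA
        · exact lt_min hμa hνb
      have htμ : t ≤ μ astar := by
        rw [htdef]; split_ifs
        · exact le_trans (min_le_left _ _) (min_le_left _ _)
        · exact min_le_left _ _
      have htν : t ≤ ν bstar := by
        rw [htdef]; split_ifs
        · exact le_trans (min_le_left _ _) (min_le_right _ _)
        · exact min_le_right _ _
      have htBad : ∀ A ∈ Bad, t ≤ dfc R μ ν A := by
        intro A hA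
        have hB : Bad.Nonempty := ⟨A, hA⟩
        rw [htdef, dif_pos hB]
        exact le_trans (min_le_right _ _) (Finset.inf'_le _ hA)
      -- updated measures
      set μ' : V → ℝ := fun a => μ a - if a = astar then t else 0 with hμ'def
      set ν' : V → ℝ := fun b => ν b - if b = bstar then t else 0 with hν'def
      have hμ'nn : ∀ a, 0 ≤ μ' a := by
        intro a
        rw [hμ'def]; dsimp only; split_ifs with h
        · subst h; linarith
        · simpa using hμ a
      have hν'nn : ∀ b, 0 ≤ ν' b := by
        intro b
        rw [hν'def]; dsimp only; split_ifs with h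
        · subst h; linarith
        · simpa using hν b
      have hsumμ' : ∀ A : Finset V,
          ∑ a ∈ A, μ' a = ∑ a ∈ A, μ a - (if astar ∈ A then t else 0) := by
        intro A
        rw [hμ'def]; dsimp only
        rw [Finset.sum_sub_distrib]
        congr 1
        exact Finset.sum_ite_eq' A astar (fun _ => t)
      have hsumν' : ∀ B : Finset V,
          ∑ b ∈ B, ν' b = ∑ b ∈ B, ν b - (if bstar ∈ B then t else 0) := by
        intro B
        rw [hν'def]; dsimp only
        rw [Finset.sum_sub_distrib]
        congr 1
        exact Finset.sum_ite_eq' B bstar (fun _ => t)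
      have hdfc' : ∀ A, dfc R μ' ν' A =
          dfc R μ ν A - (if bstar ∈ Nb R A then t else 0) + (if astar ∈ A then t else 0) := by
        intro A
        simp only [dfc]
        rw [hsumμ' A, hsumν' (Nb R A)]
        ring
      have hHall' : ∀ A, 0 ≤ dfc R μ' ν' A := by
        intro A
        rw [hdfc' A]
        by_cases haA : astar ∈ A
        · have hbA : bstar ∈ Nb R A := mem_Nb.mpr ⟨astar, haA, hRb⟩
          rw [if_pos haA, if_pos hbA]
          linarith [hHall A]
        · by_cases hbA : bstar ∈ Nb R A
          · have hABad : A ∈ Bad := by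
              rw [hBadDef, Finset.mem_filter]
              exact ⟨Finset.mem_powerset.mpr (Finset.subset_univ A), haA, hbA⟩
            have := htBad A hABad
            rw [if_neg haA, if_pos hbA]
            linarith
          · rw [if_neg haA, if_neg hbA]
            simpa using hHall A
      have hdfcle : ∀ A, dfc R μ' ν' A ≤ dfc R μ ν A := by
        intro A
        rw [hdfc' A]
        by_cases haA : astar ∈ A
        · have hbA : bstar ∈ Nb R A := mem_Nb.mpr ⟨astar, haA, hRb⟩
          rw [if_pos haA, if_pos hbA]; linarith
        · by_cases hbA : bstar ∈ Nb R A
          · rw [if_neg haA, if_pos hbA]; linarith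
          · rw [if_neg haA, if_neg hbA]; linarith
      have hsum' : ∑ a, μ' a = ∑ b, ν' b := by
        rw [hsumμ' univ, hsumν' univ, if_pos (Finset.mem_univ astar),
          if_pos (Finset.mem_univ bstar), hsum]
      -- support inclusions
      have hsubμ : (univ.filter fun a => μ' a ≠ 0) ⊆ (univ.filter fun a => μ a ≠ 0) := by
        intro a ha
        rw [Finset.mem_filter] at ha ⊢
        refine ⟨ha.1, ?_⟩
        by_cases h : a = astar
        · subst h; exact hastar.2
        · intro h0
          exact ha.2 (by rw [hμ'def]; dsimp only; rw [if_neg h, h0, sub_zero])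
      have hsubν : (univ.filter fun b => ν' b ≠ 0) ⊆ (univ.filter fun b => ν b ≠ 0) := by
        intro b hb
        rw [Finset.mem_filter] at hb ⊢
        refine ⟨hb.1, ?_⟩
        by_cases h : b = bstar
        · subst h; intro h0; rw [h0] at hνb; exact lt_irrefl 0 hνb
        · intro h0
          exact hb.2 (by rw [hν'def]; dsimp only; rw [if_neg h, h0, sub_zero])
      have hsubT : ((univ : Finset V).powerset.filter fun A => dfc R μ' ν' A ≠ 0) ⊆
          ((univ : Finset V).powerset.filter fun A => dfc R μ ν A ≠ 0) := by
        intro A hA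
        rw [Finset.mem_filter] at hA ⊢
        refine ⟨hA.1, ?_⟩
        intro h0
        have h1 : 0 < dfc R μ' ν' A := lt_of_le_of_ne (hHall' A) (Ne.symm hA.2)
        have h2 := hdfcle A
        rw [h0] at h2
        linarith
      have hcases : t = μ astar ∨ t = ν bstar ∨ ∃ A ∈ Bad, dfc R μ ν A = t := by
        rw [htdef]; split_ifs with hB
        · rcases min_cases (min (μ astar) (ν bstar)) (Bad.inf' hB (dfc R μ ν)) with
            ⟨h1, _⟩ | ⟨h1, _⟩
          · rcases min_cases (μ astar) (ν bstar) with ⟨h2, _⟩ | ⟨h2, _⟩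
            · left; rw [h1, h2]
            · right; left; rw [h1, h2]
          · right; right
            obtain ⟨A, hA, hAeq⟩ := Finset.exists_mem_eq_inf' hB (dfc R μ ν)
            exact ⟨A, hA, by rw [h1, hAeq]⟩
        · rcases min_cases (μ astar) (ν bstar) with ⟨h2, _⟩ | ⟨h2, _⟩
          · left; exact h2
          · right; left; exact h2
      have hmsr' : (univ.filter fun a => μ' a ≠ 0).card + (univ.filter fun b => ν' b ≠ 0).card +
          ((univ : Finset V).powerset.filter fun A => dfc R μ' ν' A ≠ 0).card ≤ n := by
        have hle1 := Finset.card_le_card hsubμ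
        have hle2 := Finset.card_le_card hsubν
        have hle3 := Finset.card_le_card hsubT
        rcases hcases with hc | hc | ⟨A0, hA0, hA0eq⟩
        · have hlt : (univ.filter fun a => μ' a ≠ 0).card <
              (univ.filter fun a => μ a ≠ 0).card := by
            apply Finset.card_lt_card
            rw [Finset.ssubset_iff_of_subset hsubμ]
            refine ⟨astar, by simp [hastar.2], ?_⟩
            simp only [Finset.mem_filter, Finset.mem_univ, true_and, not_not]
            rw [hμ'def]; dsimp only; rw [if_pos rfl, ← hc, sub_self]
          omega
        · have hlt : (univ.filter fun b => ν' b ≠ 0).card <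
              (univ.filter fun b => ν b ≠ 0).card := by
            apply Finset.card_lt_card
            rw [Finset.ssubset_iff_of_subset hsubν]
            refine ⟨bstar, by simp [ne_of_gt hνb], ?_⟩
            simp only [Finset.mem_filter, Finset.mem_univ, true_and, not_not]
            rw [hν'def]; dsimp only; rw [if_pos rfl, ← hc, sub_self]
          omega
        · have hA0' := hA0
          rw [hBadDef, Finset.mem_filter] at hA0'
          have hlt : (((univ : Finset V).powerset.filter fun A => dfc R μ' ν' A ≠ 0)).card <
              (((univ : Finset V).powerset.filter fun A => dfc R μ ν A ≠ 0)).card := by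
            apply Finset.card_lt_card
            rw [Finset.ssubset_iff_of_subset hsubT]
            refine ⟨A0, ?_, ?_⟩
            · rw [Finset.mem_filter]
              refine ⟨hA0'.1, ?_⟩
              rw [hA0eq]
              exact ne_of_gt ht0
            · simp only [Finset.mem_filter, not_and, not_not]
              intro _
              rw [hdfc' A0, if_pos hA0'.2.2, if_neg hA0'.2.1, hA0eq]
              ring
          omega
      obtain ⟨T, hTnn, hTrow, hTcol, hTsupp⟩ := IH μ' ν' hμ'nn hν'nn hsum' hHall' hmsr'
      refine ⟨fun a b => T a b + if a = astar ∧ b = bstar then t else 0, ?_, ?_, ?_, ?_⟩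
      · intro a b
        have := hTnn a b
        dsimp only
        split_ifs with h
        · linarith
        · linarith
      · intro a
        rw [Finset.sum_add_distrib, hTrow a]
        by_cases h : a = astar
        · have hsum2 : ∑ b, (if a = astar ∧ b = bstar then t else 0) = t := by
            rw [Finset.sum_congr rfl (fun b (_ : b ∈ univ) =>
              (by simp [h] : (if a = astar ∧ b = bstar then t else 0) = if b = bstar then t else 0))]
            rw [Finset.sum_ite_eq' univ bstar (fun _ => t), if_pos (Finset.mem_univ bstar)]
          rw [hsum2, hμ'def]; dsimp only; rw [if_pos h]; ring
        · have hsum2 : ∑ b, (if a = astar ∧ b = bstar then t else 0) = 0 := by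
            apply Finset.sum_eq_zero
            intro b _
            rw [if_neg (fun hc => h hc.1)]
          rw [hsum2, hμ'def]; dsimp only; rw [if_neg h]; ring
      · intro b
        rw [Finset.sum_add_distrib, hTcol b]
        by_cases h : b = bstar
        · have hsum2 : ∑ a, (if a = astar ∧ b = bstar then t else 0) = t := by
            rw [Finset.sum_congr rfl (fun a (_ : a ∈ univ) =>
              (by simp [h] : (if a = astar ∧ b = bstar then t else 0) = if a = astar then t else 0))]
            rw [Finset.sum_ite_eq' univ astar (fun _ => t), if_pos (Finset.mem_univ astar)]
          rw [hsum2, hν'def]; dsimp only; rw [if_pos h]; ring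
        · have hsum2 : ∑ a, (if a = astar ∧ b = bstar then t else 0) = 0 := by
            apply Finset.sum_eq_zero
            intro a _
            rw [if_neg (fun hc => h hc.2)]
          rw [hsum2, hν'def]; dsimp only; rw [if_neg h]; ring
      · intro a b hpos
        dsimp only at hpos
        by_cases h : a = astar ∧ b = bstar
        · rw [h.1, h.2]; exact hRb
        · rw [if_neg h, add_zero] at hpos
          exact hTsupp a b hpos

end FracHall

lemma key_pair {V : Type*} [Fintype V] [DecidableEq V]
    (P : V → V → ℝ)
    (hP : ∀ x y, 0 ≤ P x y)
    (hlazy : ∀ x, 1 / 2 ≤ P x x) (hrow : ∀ x, ∑ y, P x y = 1)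
    (G : SimpleGraph V) (hG : ∀ x y, G.Adj x y ↔ x ≠ y ∧ 0 < P x y)
    (hconn : G.Connected)
    (x y : V) (hxy : G.Adj x y)
    (hcomp : ∀ f : V → ℝ, (∀ u v, |f u - f v| ≤ (G.dist u v : ℝ)) → f y - f x = 1 →
      ∀ lam : ℝ, 0 ≤ lam →
        (lap P (fun z => Real.exp (lam * f z)) y / Real.exp (lam * f y) ≤
          lap P (fun z => Real.exp (lam * f z)) x / Real.exp (lam * f x)) ∧
        (lap P (fun z => Real.exp (-lam * f z)) x / Real.exp (-lam * f x) ≤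
          lap P (fun z => Real.exp (-lam * f z)) y / Real.exp (-lam * f y)))
    (A C : Finset V)
    (hAC : ∀ a ∈ A, ∀ c ∈ C, a ≠ c ∧ ¬ G.Adj a c) :
    ∑ a ∈ A, P x a + ∑ c ∈ C, P y c ≤ 1 := by
  have hPsum_le : ∀ (z : V) (S : Finset V), ∑ s ∈ S, P z s ≤ 1 := by
    intro z S
    rw [← hrow z]
    exact Finset.sum_le_sum_of_subset_of_nonneg (Finset.subset_univ S) (fun i _ _ => hP z i)
  have hPsum_disj : ∀ (z : V) (S T : Finset V), Disjoint S T →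
      ∑ s ∈ S, P z s + ∑ s ∈ T, P z s ≤ 1 := by
    intro z S T hd
    rw [← Finset.sum_union hd]
    exact hPsum_le z _
  by_cases hxA : x ∈ A
  · by_cases hyA : y ∈ A
    · have hz : ∑ c ∈ C, P y c = 0 := Finset.sum_eq_zero (fun c hc => by
        obtain ⟨hne, hnadj⟩ := hAC y hyA c hc
        by_contra h0
        exact hnadj ((hG y c).mpr ⟨hne, lt_of_le_of_ne (hP y c) (Ne.symm h0)⟩))
      have := hPsum_le x A
      linarith
    · -- CASE 2: x ∈ A, y ∉ A
      have hyC : y ∉ C := fun hyC => (hAC x hxA y hyC).2 hxy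
      have hAne : A.Nonempty := ⟨x, hxA⟩
      set F : V → ℕ := fun z =>
        min (min (A.inf' hAne (fun a => G.dist z a)) (G.dist z y + 1)) 2 with hF
      have hW : ∀ z, F z ≤ 2 := fun z => min_le_right _ _
      have hDlip : ∀ u v, A.inf' hAne (fun a => G.dist u a) ≤
          A.inf' hAne (fun a => G.dist v a) + G.dist u v := by
        intro u v
        obtain ⟨a, ha, hav⟩ := Finset.exists_mem_eq_inf' hAne (fun a => G.dist v a)
        have h1 : A.inf' hAne (fun a => G.dist u a) ≤ G.dist u a := Finset.inf'_le _ ha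
        have h2 : G.dist u a ≤ G.dist u v + G.dist v a := hconn.dist_triangle
        omega
      have hFlip : ∀ u v, F u ≤ F v + G.dist u v := by
        intro u v
        have h1 := hDlip u v
        have h2 : G.dist u y ≤ G.dist u v + G.dist v y := hconn.dist_triangle
        rw [hF]; dsimp only
        omega
      set f : V → ℝ := fun z => (F z : ℝ) with hf
      have hLip : ∀ u v, |f u - f v| ≤ (G.dist u v : ℝ) := by
        intro u v
        rw [abs_sub_le_iff]
        constructor
        · have h1 := hFlip u v
          rw [hf]; dsimp only
          have h2 : (F u : ℝ) ≤ F v + G.dist u v := by exact_mod_cast h1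
          linarith
        · have h1 := hFlip v u
          rw [hf]; dsimp only
          have h2 : (F v : ℝ) ≤ F u + G.dist v u := by exact_mod_cast h1
          rw [SimpleGraph.dist_comm] at h2
          linarith
      have hFA : ∀ a ∈ A, F a = 0 := by
        intro a ha
        have h1 : A.inf' hAne (fun b => G.dist a b) ≤ G.dist a a := Finset.inf'_le _ ha
        rw [SimpleGraph.dist_self] at h1
        rw [hF]; dsimp only
        omega
      have hFx : F x = 0 := hFA x hxA
      have hFy : F y = 1 := by
        have h1 : 1 ≤ A.inf' hAne (fun a => G.dist y a) := by
          rw [Finset.le_inf'_iff]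
          intro a ha
          exact one_le_dist_of_ne hconn (fun h => hyA (h ▸ ha))
        have h2 : G.dist y y = 0 := SimpleGraph.dist_self
        rw [hF]; dsimp only
        omega
      have hFC : ∀ c ∈ C, F c = 2 := by
        intro c hc
        have h1 : 2 ≤ A.inf' hAne (fun a => G.dist c a) := by
          rw [Finset.le_inf'_iff]
          intro a ha
          obtain ⟨hne, hnadj⟩ := hAC a ha c hc
          exact two_le_dist_of hconn (Ne.symm hne) (fun h => hnadj h.symm)
        have h2 : 1 ≤ G.dist c y := one_le_dist_of_ne hconn (fun h => hyC (h ▸ hc))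
        rw [hF]; dsimp only
        omega
      have hFsupp : ∀ z, P x z ≠ 0 → F z ≤ 1 := by
        intro z hz
        by_cases h : z = x
        · rw [h, hFx]; omega
        · have hadj : G.Adj x z :=
            (hG x z).mpr ⟨fun he => h he.symm, lt_of_le_of_ne (hP x z) (Ne.symm hz)⟩
          have hd : G.dist z x ≤ 1 := by
            rw [SimpleGraph.dist_comm]; exact dist_le_one_of_adj hadj
          have h3 : A.inf' hAne (fun a => G.dist z a) ≤ G.dist z x := Finset.inf'_le _ hxA
          rw [hF]; dsimp only
          omega
      have hdiff : f y - f x = 1 := by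
        rw [hf]; dsimp only; rw [hFy, hFx]; norm_num
      have hkey : ∀ l : ℝ, 1 ≤ l →
          (∑ z ∈ univ.filter (fun z => F z = 0), P y z) * (1 - exp l) +
          (∑ z ∈ univ.filter (fun z => F z = 2), P y z) * (exp l * exp l - exp l) ≤
          (∑ z ∈ univ.filter (fun z => F z = 1), P x z) * (exp l - 1) * exp l := by
        intro l hl
        have h := (hcomp f hLip hdiff l (by linarith)).1
        have hexpfy : exp (l * f y) = exp l := by
          rw [hf]; dsimp only; rw [hFy]; norm_num
        have hexpfx : exp (l * f x) = 1 := by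
          rw [hf]; dsimp only; rw [hFx]; norm_num
        have hlapy : lap P (fun z => exp (l * f z)) y =
            (∑ z ∈ univ.filter (fun z => F z = 0), P y z) * (1 - exp l) +
            (∑ z ∈ univ.filter (fun z => F z = 2), P y z) * (exp l * exp l - exp l) := by
          rw [lap]
          calc ∑ z, P y z * (exp (l * f z) - exp (l * f y))
              = ∑ z, P y z * ((fun k : ℕ => exp (l * k) - exp l) (F z)) := by
                apply Finset.sum_congr rfl
                intro z _
                rw [hexpfy, hf]
            _ = (∑ z ∈ univ.filter (fun z => F z = 0), P y z) * (exp (l * (0:ℕ)) - exp l) +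
                (∑ z ∈ univ.filter (fun z => F z = 1), P y z) * (exp (l * (1:ℕ)) - exp l) +
                (∑ z ∈ univ.filter (fun z => F z = 2), P y z) * (exp (l * (2:ℕ)) - exp l) :=
                sum_split_W F hW (P y) (fun k => exp (l * k) - exp l)
            _ = _ := by
                push_cast
                rw [mul_zero, exp_zero, mul_one, show l * 2 = l + l by ring, exp_add]
                ring
        have hlapx : lap P (fun z => exp (l * f z)) x =
            (∑ z ∈ univ.filter (fun z => F z = 1), P x z) * (exp l - 1) := by
          rw [lap]
          calc ∑ z, P x z * (exp (l * f z) - exp (l * f x))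
              = ∑ z, P x z * ((fun k : ℕ => exp (l * k) - 1) (F z)) := by
                apply Finset.sum_congr rfl
                intro z _
                rw [hexpfx, hf]
            _ = (∑ z ∈ univ.filter (fun z => F z = 0), P x z) * (exp (l * (0:ℕ)) - 1) +
                (∑ z ∈ univ.filter (fun z => F z = 1), P x z) * (exp (l * (1:ℕ)) - 1) +
                (∑ z ∈ univ.filter (fun z => F z = 2), P x z) * (exp (l * (2:ℕ)) - 1) :=
                sum_split_W F hW (P x) (fun k => exp (l * k) - 1)
            _ = _ := by
                have h2 : (∑ z ∈ univ.filter (fun z => F z = 2), P x z) = 0 := by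
                  apply Finset.sum_eq_zero
                  intro z hz
                  rw [Finset.mem_filter] at hz
                  by_contra h0
                  have := hFsupp z h0
                  omega
                rw [h2]
                push_cast
                rw [mul_zero, exp_zero, mul_one]
                ring
        rw [hlapy, hlapx, hexpfy, hexpfx, div_one, div_le_iff₀ (exp_pos l)] at h
        calc (∑ z ∈ univ.filter (fun z => F z = 0), P y z) * (1 - exp l) +
            (∑ z ∈ univ.filter (fun z => F z = 2), P y z) * (exp l * exp l - exp l) ≤
            (∑ z ∈ univ.filter (fun z => F z = 1), P x z) * (exp l - 1) * exp l := h
          _ = _ := rfl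
      have hab := coef_extract _ _ _
        (Finset.sum_nonneg fun z _ => hP y z) hkey
      have hCa2 : ∑ c ∈ C, P y c ≤ ∑ z ∈ univ.filter (fun z => F z = 2), P y z := by
        apply Finset.sum_le_sum_of_subset_of_nonneg
        · intro c hc
          rw [Finset.mem_filter]
          exact ⟨Finset.mem_univ c, hFC c hc⟩
        · intro z _ _; exact hP y z
      have hAb1 : ∑ a ∈ A, P x a + ∑ z ∈ univ.filter (fun z => F z = 1), P x z ≤ 1 := by
        apply hPsum_disj x
        rw [Finset.disjoint_left]
        intro a ha hmem
        rw [Finset.mem_filter] at hmem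
        have := hFA a ha
        omega
      linarith
  · by_cases hyC : y ∈ C
    · by_cases hxC : x ∈ C
      · have hz : ∑ a ∈ A, P x a = 0 := Finset.sum_eq_zero (fun a ha => by
          obtain ⟨hne, hnadj⟩ := hAC a ha x hxC
          by_contra h0
          exact hnadj (((hG x a).mpr ⟨Ne.symm hne,
            lt_of_le_of_ne (hP x a) (Ne.symm h0)⟩).symm))
        have := hPsum_le y C
        linarith
      · -- CASE 3 : y ∈ C, x ∉ A, x ∉ C
        have hSne : (insert y C).Nonempty := ⟨y, Finset.mem_insert_self y C⟩
        set F : V → ℕ := fun z =>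
          min (min ((insert y C).inf' hSne (fun c => G.dist z c)) (G.dist z x + 1)) 2 with hF
        have hW : ∀ z, F z ≤ 2 := fun z => min_le_right _ _
        have hDlip : ∀ u v, (insert y C).inf' hSne (fun c => G.dist u c) ≤
            (insert y C).inf' hSne (fun c => G.dist v c) + G.dist u v := by
          intro u v
          obtain ⟨c, hc, hcv⟩ := Finset.exists_mem_eq_inf' hSne (fun c => G.dist v c)
          have h1 : (insert y C).inf' hSne (fun c => G.dist u c) ≤ G.dist u c :=
            Finset.inf'_le _ hc
          have h2 : G.dist u c ≤ G.dist u v + G.dist v c := hconn.dist_triangle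
          omega
        have hFlip : ∀ u v, F u ≤ F v + G.dist u v := by
          intro u v
          have h1 := hDlip u v
          have h2 : G.dist u x ≤ G.dist u v + G.dist v x := hconn.dist_triangle
          rw [hF]; dsimp only
          omega
        set f : V → ℝ := fun z => 1 - (F z : ℝ) with hf
        have hLip : ∀ u v, |f u - f v| ≤ (G.dist u v : ℝ) := by
          intro u v
          rw [abs_sub_le_iff]
          constructor
          · have h1 := hFlip v u
            rw [hf]; dsimp only
            have h2 : (F v : ℝ) ≤ F u + G.dist v u := by exact_mod_cast h1
            rw [SimpleGraph.dist_comm] at h2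
            linarith
          · have h1 := hFlip u v
            rw [hf]; dsimp only
            have h2 : (F u : ℝ) ≤ F v + G.dist u v := by exact_mod_cast h1
            linarith
        have hF0 : ∀ s ∈ insert y C, F s = 0 := by
          intro s hs
          have h1 : (insert y C).inf' hSne (fun c => G.dist s c) ≤ G.dist s s :=
            Finset.inf'_le _ hs
          rw [SimpleGraph.dist_self] at h1
          rw [hF]; dsimp only
          omega
        have hFy : F y = 0 := hF0 y (Finset.mem_insert_self y C)
        have hFx : F x = 1 := by
          have h1 : 1 ≤ (insert y C).inf' hSne (fun c => G.dist x c) := by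
            rw [Finset.le_inf'_iff]
            intro s hs
            apply one_le_dist_of_ne hconn
            intro h
            rcases Finset.mem_insert.mp hs with h' | h'
            · exact G.ne_of_adj hxy (h.trans h')
            · exact hxC (h ▸ h')
          have h2 : G.dist x x = 0 := SimpleGraph.dist_self
          rw [hF]; dsimp only
          omega
        have hFA : ∀ a ∈ A, F a = 2 := by
          intro a ha
          have h1 : 2 ≤ (insert y C).inf' hSne (fun c => G.dist a c) := by
            rw [Finset.le_inf'_iff]
            intro s hs
            rcases Finset.mem_insert.mp hs with h' | h'
            · obtain ⟨hne, hnadj⟩ := hAC a ha y hyC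
              rw [h']
              exact two_le_dist_of hconn hne hnadj
            · obtain ⟨hne, hnadj⟩ := hAC a ha s h'
              exact two_le_dist_of hconn hne hnadj
          have h2 : 1 ≤ G.dist a x :=
            one_le_dist_of_ne hconn (fun h => hxA (h ▸ ha))
          rw [hF]; dsimp only
          omega
        have hFsupp : ∀ z, P y z ≠ 0 → F z ≤ 1 := by
          intro z hz
          by_cases h : z = y
          · rw [h, hFy]; omega
          · have hadj : G.Adj y z :=
              (hG y z).mpr ⟨fun he => h he.symm, lt_of_le_of_ne (hP y z) (Ne.symm hz)⟩
            have hd : G.dist z y ≤ 1 := by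
              rw [SimpleGraph.dist_comm]; exact dist_le_one_of_adj hadj
            have h3 : (insert y C).inf' hSne (fun c => G.dist z c) ≤ G.dist z y :=
              Finset.inf'_le _ (Finset.mem_insert_self y C)
            rw [hF]; dsimp only
            omega
        have hdiff : f y - f x = 1 := by
          rw [hf]; dsimp only; rw [hFy, hFx]; norm_num
        have hkey : ∀ l : ℝ, 1 ≤ l →
            (∑ z ∈ univ.filter (fun z => F z = 0), P x z) * (1 - exp l) +
            (∑ z ∈ univ.filter (fun z => F z = 2), P x z) * (exp l * exp l - exp l) ≤
            (∑ z ∈ univ.filter (fun z => F z = 1), P y z) * (exp l - 1) * exp l := by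
          intro l hl
          have h := (hcomp f hLip hdiff l (by linarith)).2
          have hfz : ∀ z, exp (-l * f z) = exp (l * (F z : ℝ)) * exp (-l) := by
            intro z
            rw [hf]; dsimp only
            rw [← exp_add]
            ring_nf
          have hexpfx : exp (-l * f x) = 1 := by
            rw [hf]; dsimp only; rw [hFx]; norm_num
          have hexpfy : exp (-l * f y) = exp (-l) := by
            rw [hf]; dsimp only; rw [hFy]; norm_num
          have hlapx : lap P (fun z => exp (-l * f z)) x =
              ((∑ z ∈ univ.filter (fun z => F z = 0), P x z) * (1 - exp l) +
               (∑ z ∈ univ.filter (fun z => F z = 2), P x z) * (exp l * exp l - exp l))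
                * exp (-l) := by
            rw [lap]
            calc ∑ z, P x z * (exp (-l * f z) - exp (-l * f x))
                = ∑ z, P x z * ((fun k : ℕ => exp (l * k) - exp l) (F z)) * exp (-l) := by
                  apply Finset.sum_congr rfl
                  intro z _
                  rw [hfz z, hexpfx, hF]
                  dsimp only
                  rw [show (1:ℝ) = exp l * exp (-l) by rw [← exp_add]; simp]
                  ring
              _ = (∑ z, P x z * ((fun k : ℕ => exp (l * k) - exp l) (F z))) * exp (-l) := by
                  rw [Finset.sum_mul]
              _ = _ := by
                  rw [sum_split_W F hW (P x) (fun k => exp (l * k) - exp l)]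
                  push_cast
                  rw [mul_zero, exp_zero, mul_one, show l * 2 = l + l by ring, exp_add]
                  ring_nf
          have hlapy : lap P (fun z => exp (-l * f z)) y =
              ((∑ z ∈ univ.filter (fun z => F z = 1), P y z) * (exp l - 1)) * exp (-l) := by
            rw [lap]
            calc ∑ z, P y z * (exp (-l * f z) - exp (-l * f y))
                = ∑ z, P y z * ((fun k : ℕ => exp (l * k) - 1) (F z)) * exp (-l) := by
                  apply Finset.sum_congr rfl
                  intro z _
                  rw [hfz z, hexpfy, hF]
                  dsimp only
                  ring
              _ = (∑ z, P y z * ((fun k : ℕ => exp (l * k) - 1) (F z))) * exp (-l) := by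
                  rw [Finset.sum_mul]
              _ = _ := by
                  rw [sum_split_W F hW (P y) (fun k => exp (l * k) - 1)]
                  have h2 : (∑ z ∈ univ.filter (fun z => F z = 2), P y z) = 0 := by
                    apply Finset.sum_eq_zero
                    intro z hz
                    rw [Finset.mem_filter] at hz
                    by_contra h0
                    have := hFsupp z h0
                    omega
                  rw [h2]
                  push_cast
                  rw [mul_zero, exp_zero, mul_one]
                  ring_nf
          rw [hlapx, hlapy, hexpfx, hexpfy, div_one,
            mul_div_assoc, div_self (exp_ne_zero (-l)), mul_one] at h
          calc (∑ z ∈ univ.filter (fun z => F z = 0), P x z) * (1 - exp l) +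
              (∑ z ∈ univ.filter (fun z => F z = 2), P x z) * (exp l * exp l - exp l)
              = (((∑ z ∈ univ.filter (fun z => F z = 0), P x z) * (1 - exp l) +
                 (∑ z ∈ univ.filter (fun z => F z = 2), P x z) * (exp l * exp l - exp l))
                  * exp (-l)) * exp l := by
                have hee : exp (-l) * exp l = 1 := by
                  rw [← exp_add, neg_add_cancel, exp_zero]
                rw [mul_assoc, hee, mul_one]
            _ ≤ ((∑ z ∈ univ.filter (fun z => F z = 1), P y z) * (exp l - 1)) * exp l :=
                mul_le_mul_of_nonneg_right h (exp_pos l).le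
            _ = _ := by ring
        have hab := coef_extract _ _ _
          (Finset.sum_nonneg fun z _ => hP x z) hkey
        have hCa2 : ∑ a ∈ A, P x a ≤ ∑ z ∈ univ.filter (fun z => F z = 2), P x z := by
          apply Finset.sum_le_sum_of_subset_of_nonneg
          · intro a ha
            rw [Finset.mem_filter]
            exact ⟨Finset.mem_univ a, hFA a ha⟩
          · intro z _ _; exact hP x z
        have hAb1 : ∑ c ∈ C, P y c + ∑ z ∈ univ.filter (fun z => F z = 1), P y z ≤ 1 := by
          apply hPsum_disj y
          rw [Finset.disjoint_left]
          intro c hc hmem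
          rw [Finset.mem_filter] at hmem
          have := hF0 c (Finset.mem_insert_of_mem hc)
          omega
        linarith
    · -- lazy case : x ∉ A, y ∉ C
      have h1 : ∑ a ∈ A, P x a + P x x ≤ 1 := by
        have h := hPsum_le x (insert x A)
        rw [Finset.sum_insert hxA] at h
        linarith
      have h2 : ∑ c ∈ C, P y c + P y y ≤ 1 := by
        have h := hPsum_le y (insert y C)
        rw [Finset.sum_insert hyC] at h
        linarith
      have h3 := hlazy x
      have h4 := hlazy y
      linarith

/-- If the exponential gradient comparisons hold for all `f ∈ Lip(1)` with
`f(y)-f(x) = 1` and all `λ ≥ 0`, then the edge `x∼y` has non-negative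
Ollivier sectional curvature, i.e. there exists a coupling of `P(x,·)` and `P(y,·)`
supported on pairs at distance at most `1`. -/
theorem exp_comparison_implies_sectional {V : Type*} [Fintype V] [DecidableEq V]
    (P : V → V → ℝ) (m : V → ℝ)
    (hP : ∀ x y, 0 ≤ P x y) (hm : ∀ x, 0 < m x)
    (hrev : ∀ x y, m x * P x y = m y * P y x)
    (hlazy : ∀ x, 1 / 2 ≤ P x x) (hrow : ∀ x, ∑ y, P x y = 1)
    (G : SimpleGraph V) (hG : ∀ x y, G.Adj x y ↔ x ≠ y ∧ 0 < P x y)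
    (hconn : G.Connected)
    (x y : V) (hxy : G.Adj x y)
    (hcomp : ∀ f : V → ℝ, (∀ u v, |f u - f v| ≤ (G.dist u v : ℝ)) → f y - f x = 1 →
      ∀ lam : ℝ, 0 ≤ lam →
        (lap P (fun z => Real.exp (lam * f z)) y / Real.exp (lam * f y) ≤
          lap P (fun z => Real.exp (lam * f z)) x / Real.exp (lam * f x)) ∧
        (lap P (fun z => Real.exp (-lam * f z)) x / Real.exp (-lam * f x) ≤
          lap P (fun z => Real.exp (-lam * f z)) y / Real.exp (-lam * f y))) :
    ∃ cpl : V → V → ℝ, (∀ a b, 0 ≤ cpl a b) ∧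
      (∀ a, (∑ b, cpl a b) = P x a) ∧ (∀ b, (∑ a, cpl a b) = P y b) ∧
      (∀ a b, 0 < cpl a b → G.dist a b ≤ 1) := by
  classical
  set R : V → V → Prop := fun a b => a = b ∨ G.Adj a b with hR
  have hrefl : ∀ a, R a a := fun a => Or.inl rfl
  have hHall : ∀ A : Finset V, 0 ≤ dfc R (P x) (P y) A := by
    intro A
    rw [dfc]
    have hpairs : ∀ a ∈ A, ∀ c ∈ univ \ Nb R A, a ≠ c ∧ ¬ G.Adj a c := by
      intro a ha c hc
      rw [Finset.mem_sdiff, mem_Nb] at hc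
      have h1 := hc.2
      push_neg at h1
      have h2 := h1 a ha
      rw [hR] at h2
      exact ⟨fun h => h2 (Or.inl h), fun h => h2 (Or.inr h)⟩
    have hkp := key_pair P hP hlazy hrow G hG hconn x y hxy hcomp A (univ \ Nb R A) hpairs
    have hsplit : ∑ c ∈ univ \ Nb R A, P y c + ∑ b ∈ Nb R A, P y b = 1 := by
      rw [Finset.sum_sdiff (Finset.subset_univ _)]
      exact hrow y
    linarith
  obtain ⟨T, hTnn, hTrow, hTcol, hTsupp⟩ :=
    fracHall R hrefl
      ((univ.filter fun a => P x a ≠ 0).card + (univ.filter fun b => P y b ≠ 0).card +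
        ((univ : Finset V).powerset.filter fun A => dfc R (P x) (P y) A ≠ 0).card)
      (P x) (P y) (fun a => hP x a) (fun b => hP y b)
      (by rw [hrow x, hrow y]) hHall (le_refl _)
  refine ⟨T, hTnn, hTrow, hTcol, ?_⟩
  intro a b hpos
  rcases hTsupp a b hpos with h | h
  · rw [h, SimpleGraph.dist_self]
    omega
  · exact dist_le_one_of_adj h
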